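/- Let N ≥ 1 and let E : Fin N → Fin N → Prop satisfy E a a for every a. For any a ≠ j with E a j, the edge (a, j) is maximally matchable (i.e., lies in some perfect matching of E) if and only if there exists an elementary cycle of the digraph E whose first two vertices are a and j (that is, pairwise distinct vertices i_1 = a, i_2 = j, i_3, …, i_k with E i_q i_{q+1} for all q < k and E i_k i_1). -/

import Mathlib

/-- For a digraph `E` on `Fin N` with a loop at every vertex, an edge
`(a, j)` with `a ≠ j` is maximally matchable (lies in some perfect matching) iff there is
an elementary cycle of `E` whose first two vertices are `a` and `j`: a nodup list
`a :: j :: t` whose consecutive vertices are joined by edges of `E` and whose last vertex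
has an edge back to `a`. -/
theorem lqn_maximally_matchable_iff_cycle (N : ℕ) (hN : 1 ≤ N)
    (E : Fin N → Fin N → Prop) (hloop : ∀ a, E a a)
    (a j : Fin N) (hne : a ≠ j) (he : E a j) :
    (∃ σ : Equiv.Perm (Fin N), (∀ b, E b (σ b)) ∧ σ a = j) ↔
    (∃ t : List (Fin N), (a :: j :: t).Nodup ∧ (a :: j :: t).Chain' E ∧
      E ((a :: j :: t).getLast (List.cons_ne_nil _ _)) a) := by
  constructor
  · rintro ⟨σ, hσ, hσa⟩
    set f : ℕ → Fin N := fun i => (⇑σ)^[i] a with hf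
    have hfs : ∀ i, f (i + 1) = σ (f i) := fun i => Function.iterate_succ_apply' _ _ _
    have hper : Function.IsPeriodicPt σ (orderOf σ) a := by
      rw [Function.IsPeriodicPt, Function.IsFixedPt, Equiv.Perm.iterate_eq_pow,
        pow_orderOf_eq_one]
      rfl
    set k := Function.minimalPeriod (⇑σ) a with hkdef
    clear_value k
    have hk0 : 0 < k := hkdef ▸ hper.minimalPeriod_pos (orderOf_pos σ)
    have hfk : f k = a := by rw [hkdef]; exact Function.iterate_minimalPeriod
    have hk1 : k ≠ 1 := by
      intro h
      apply hne
      have := hfk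
      rw [h] at this
      simpa [f, hσa] using this.symm
    obtain ⟨m, rfl⟩ : ∃ m, k = m + 2 := by
      rcases k with _ | _ | m
      · omega
      · omega
      · exact ⟨m, rfl⟩
    refine ⟨(List.range m).map (fun i => f (i + 2)), ?_⟩
    have hL : a :: j :: (List.range m).map (fun i => f (i + 2)) =
        (List.range (m + 2)).map f := by
      rw [List.range_succ_eq_map, List.range_succ_eq_map]
      simp only [List.map_cons, List.map_map, Function.comp_def, f, Function.iterate_zero,
        id_eq, Function.iterate_one, hσa, List.map_nil, Equiv.Perm.iterate_eq_pow]
      rw [show (σ ^ 0) a = a from rfl, show (σ ^ Nat.succ 0) a = j by simpa using hσa]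
    have hinj : ∀ x ∈ List.range (m + 2), ∀ y ∈ List.range (m + 2), f x = f y → x = y := by
      intro x hx y hy hxy
      exact Function.iterate_injOn_Iio_minimalPeriod
        (show _ ∈ Set.Iio _ by rw [← hkdef]; simpa using List.mem_range.mp hx)
        (show _ ∈ Set.Iio _ by rw [← hkdef]; simpa using List.mem_range.mp hy) hxy
    refine ⟨?_, ?_, ?_⟩
    · rw [hL]
      exact List.Nodup.map_on hinj List.nodup_range
    · rw [hL, show List.Chain' E _ ↔ List.IsChain E _ from Iff.rfl, List.isChain_map]
      rw [show m + 2 = (m + 1) + 1 from rfl, List.isChain_range_succ]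
      intro i hi
      rw [hfs i]
      exact hσ (f i)
    · have hlast : (a :: j :: (List.range m).map (fun i => f (i + 2))).getLast
          (List.cons_ne_nil _ _) = f (m + 1) := by
        simp only [hL, List.getLast_eq_getElem, List.length_map, List.length_range,
          List.getElem_map, List.getElem_range]
        norm_num
      rw [hlast]
      have : σ (f (m + 1)) = a := by rw [← hfs]; exact hfk
      have h2 := hσ (f (m + 1))
      rwa [this] at h2
  · rintro ⟨t, hnd, hch, hlast⟩
    refine ⟨(a :: j :: t).formPerm, ?_, List.formPerm_apply_head a j t hnd⟩
    intro b
    by_cases hb : b ∈ (a :: j :: t)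
    · obtain ⟨i, hi, rfl⟩ := List.mem_iff_getElem.mp hb
      rw [List.formPerm_apply_getElem _ hnd i hi]
      rcases eq_or_lt_of_le (Nat.succ_le_of_lt hi) with heq | hlt
      · have heq' : i + 1 = (a :: j :: t).length := heq
        have h0 : (i + 1) % (a :: j :: t).length = 0 := by
          rw [heq', Nat.mod_self]
        simp only [h0]
        have hg : (a :: j :: t)[0] = a := rfl
        rw [hg]
        have : (a :: j :: t).getLast (List.cons_ne_nil _ _) = (a :: j :: t)[i] := by
          rw [List.getLast_eq_getElem]
          congr 1
          omega
        rwa [this] at hlast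
      · simp only [Nat.mod_eq_of_lt hlt]
        have := List.isChain_iff_getElem.mp hch i (by omega)
        simpa [List.get_eq_getElem] using this
    · rw [List.formPerm_apply_of_notMem hb]
      exact hloop b
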